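/- arXiv:1405.5394 — 5 statements merged into one kernel-verified Lean document; each statement's English description precedes it below -/
import Mathlib

section
/- Let V be a finite-dimensional real vector space, Ω : V → V → ℝ a skew-symmetric bilinear form, and Δ ⊆ V a linear subspace. Define D(Ω,Δ) = {(v,α) ∈ V × V* : v ∈ Δ and α(w) = Ω(v,w) for all w ∈ Δ}. If (u,β) ∈ V × V* satisfies α(u) + β(v) = 0 for every (v,α) ∈ D(Ω,Δ), then (u,β) ∈ D(Ω,Δ); that is, D(Ω,Δ)^⊥ ⊆ D(Ω,Δ). -/
/-- in finite dimensions, any pair `(u,β)` orthogonal (for the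
symmetric pairing `⟪(v,α),(w,β)⟫ = α(w) + β(v)`) to every element of
`D(Ω,Δ) = {(v,α) | v ∈ Δ ∧ ∀ w ∈ Δ, α w = Ω v w}` belongs to `D(Ω,Δ)`;
i.e. `D(Ω,Δ)ᗮ ⊆ D(Ω,Δ)`. -/
theorem dirac_coisotropic {V : Type*} [AddCommGroup V] [Module ℝ V]
    [FiniteDimensional ℝ V]
    (Ω : V →ₗ[ℝ] V →ₗ[ℝ] ℝ) (hΩ : ∀ v w, Ω v w = - Ω w v)
    (Δ : Submodule ℝ V)
    (D : Set (V × Module.Dual ℝ V))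
    (hD : D = {x : V × Module.Dual ℝ V | x.1 ∈ Δ ∧ ∀ w ∈ Δ, x.2 w = Ω x.1 w})
    (u : V) (β : Module.Dual ℝ V)
    (h : ∀ x ∈ D, x.2 u + β x.1 = 0) :
    (u, β) ∈ D := by
  subst hD
  have hu : u ∈ Δ := by
    rw [← Subspace.forall_mem_dualAnnihilator_apply_eq_zero_iff]
    intro φ hφ
    have := h (0, φ) ⟨Δ.zero_mem, fun w hw => by
      simpa using ((Submodule.mem_dualAnnihilator φ).mp hφ w hw)⟩
    simpa using this
  refine ⟨hu, fun w hw => ?_⟩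
  have := h (w, Ω w) ⟨hw, fun _ _ => rfl⟩
  simp only at this
  rw [hΩ u w]
  linarith
end

section
/- Let V be a finite-dimensional real vector space, Ω : V → V → ℝ a skew-symmetric bilinear form, and Δ ⊆ V a linear subspace. Then the subspace D(Ω,Δ) = {(v,α) ∈ V × V* : v ∈ Δ and α(w) = Ω(v,w) for all w ∈ Δ} is a Dirac structure on V, i.e. D(Ω,Δ) = D(Ω,Δ)^⊥ with respect to the symmetric pairing ⟪(v,α),(w,β)⟫ = α(w) + β(v). -/
/-- in finite dimensions, `D(Ω,Δ)` is a Dirac structure on `V`,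
i.e. it coincides with its orthogonal complement with respect to the symmetric
pairing `⟪(v,α),(w,β)⟫ = α(w) + β(v)` on `V × V*`. -/
theorem dirac_structure_eq_orthogonal {V : Type*} [AddCommGroup V] [Module ℝ V]
    [FiniteDimensional ℝ V]
    (Ω : V →ₗ[ℝ] V →ₗ[ℝ] ℝ) (hΩ : ∀ v w, Ω v w = - Ω w v)
    (Δ : Submodule ℝ V)
    (D : Set (V × Module.Dual ℝ V))
    (hD : D = {x : V × Module.Dual ℝ V | x.1 ∈ Δ ∧ ∀ w ∈ Δ, x.2 w = Ω x.1 w}) :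
    D = {y : V × Module.Dual ℝ V | ∀ x ∈ D, x.2 y.1 + y.2 x.1 = 0} := by
  obtain ⟨p, hp⟩ := Submodule.exists_isCompl Δ
  set π := Submodule.projectionOnto Δ p hp with hπ
  ext ⟨w, β⟩
  simp only [hD, Set.mem_setOf_eq]
  constructor
  · rintro ⟨hw, hβ⟩ ⟨v, α⟩ ⟨hv, hα⟩
    simp only at *
    rw [hα w hw, hβ v hv, hΩ w v]
    ring
  · intro h
    -- first: w ∈ Δ, using annihilator elements
    have hwΔ : w ∈ Δ := by
      rw [← Subspace.forall_mem_dualAnnihilator_apply_eq_zero_iff Δ w]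
      intro φ hφ
      have := h (0, φ) ⟨Δ.zero_mem, fun u hu => by
        simp [(Submodule.mem_dualAnnihilator φ).mp hφ u hu]⟩
      simpa using this
    refine ⟨hwΔ, fun v hv => ?_⟩
    -- use the extension α := Ω v ∘ π
    set α : Module.Dual ℝ V := (Ω v).comp (Δ.subtype.comp π) with hαdef
    have hmem : (v, α) ∈ {x : V × Module.Dual ℝ V | x.1 ∈ Δ ∧ ∀ w ∈ Δ, x.2 w = Ω x.1 w} := by
      refine ⟨hv, fun u hu => ?_⟩
      simp [hαdef, hπ, Submodule.projectionOnto_apply_left hp ⟨u, hu⟩]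
    have := h (v, α) hmem
    simp only [hαdef, hπ, LinearMap.comp_apply, Submodule.subtype_apply,
      Submodule.projectionOnto_apply_left hp ⟨w, hwΔ⟩] at this
    rw [hΩ v w] at this
    linarith
end

section
/- Let Δ ⊆ ℝ^n be a linear subspace. Consider on ℝ^n × ℝ^n the canonical symplectic bilinear form Ω_can((a,b),(c,d)) = a·d − b·c and the lifted subspace Δ_T = {(c,d) ∈ ℝ^n × ℝ^n : c ∈ Δ}. Then the induced Dirac structure D = {((a,b),(α,w)) ∈ (ℝ^n × ℝ^n) × (ℝ^n × ℝ^n) : (a,b) ∈ Δ_T and α·c + w·d = Ω_can((a,b),(c,d)) for all (c,d) ∈ Δ_T} equals the set {((a,b),(α,w)) : a ∈ Δ, w = a, and α + b ∈ Δ°}. -/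
open scoped BigOperators

/-- The dot product on `ℝ^k`. -/
def dot {k : ℕ} (x y : Fin k → ℝ) : ℝ := ∑ i, x i * y i


lemma dot_add_left {k : ℕ} (x y z : Fin k → ℝ) :
    dot (x + y) z = dot x z + dot y z := by
  simp [dot, add_mul, Finset.sum_add_distrib]

lemma dot_zero_right {k : ℕ} (x : Fin k → ℝ) : dot x 0 = 0 := by
  simp [dot]

lemma dot_single {k : ℕ} (x : Fin k → ℝ) (i : Fin k) :
    dot x (Pi.single i 1) = x i := by
  simp [dot, Pi.single_apply, mul_ite]

/-- local form of the induced Dirac structure.  With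
`Ω_can((a,b),(c,d)) = a·d − b·c` on `ℝ^n × ℝ^n` and the lifted subspace
`Δ_T = {(c,d) | c ∈ Δ}`, the induced Dirac structure
`D = {((a,b),(α,w)) | (a,b) ∈ Δ_T ∧ ∀ (c,d) ∈ Δ_T, α·c + w·d = Ω_can((a,b),(c,d))}`
equals `{((a,b),(α,w)) | a ∈ Δ ∧ w = a ∧ α + b ∈ Δ°}`. -/
theorem induced_dirac_local {n : ℕ} (Δ : Submodule ℝ (Fin n → ℝ)) :
    {x : ((Fin n → ℝ) × (Fin n → ℝ)) × ((Fin n → ℝ) × (Fin n → ℝ)) |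
        x.1.1 ∈ Δ ∧
        ∀ c d : Fin n → ℝ, c ∈ Δ →
          dot x.2.1 c + dot x.2.2 d = dot x.1.1 d - dot x.1.2 c} =
    {x : ((Fin n → ℝ) × (Fin n → ℝ)) × ((Fin n → ℝ) × (Fin n → ℝ)) |
        x.1.1 ∈ Δ ∧ x.2.2 = x.1.1 ∧ ∀ u ∈ Δ, dot (x.2.1 + x.1.2) u = 0} := by
  ext x
  obtain ⟨⟨a, b⟩, α, w⟩ := x
  simp only [Set.mem_setOf_eq]
  constructor
  · rintro ⟨ha, h⟩
    have hw : w = a := by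
      funext i
      have := h 0 (Pi.single i 1) Δ.zero_mem
      simpa only [dot_single, dot_zero_right, zero_add, sub_zero] using this
    refine ⟨ha, hw, fun u hu => ?_⟩
    have := h u 0 hu
    simp only [dot_zero_right, add_zero, zero_sub] at this
    rw [dot_add_left]
    linarith
  · rintro ⟨ha, hw, h⟩
    refine ⟨ha, fun c d hc => ?_⟩
    have := h c hc
    rw [dot_add_left] at this
    rw [hw]
    linarith
end

section
/- Let L : ℝ^n × ℝ^n → ℝ be differentiable at (q,v), let Δ ⊆ ℝ^n be a linear subspace, and let p, q̇, ṗ ∈ ℝ^n. Then the following are equivalent: (i) [Lagrange-Dirac condition] p = ∂L/∂v(q,v), q̇ ∈ Δ, and for all (δq,δp) with δq ∈ Δ one has (−∂L/∂q(q,v))·δq + v·δp = q̇·δp − ṗ·δq; (ii) [implicit Lagrange-d'Alembert equations] p = ∂L/∂v(q,v), q̇ = v, v ∈ Δ, and (ṗ − ∂L/∂q(q,v))·u = 0 for all u ∈ Δ. -/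
open scoped BigOperators

lemma dot_ext {k : ℕ} (x y : Fin k → ℝ) (h : ∀ z, dot x z = dot y z) :
    x = y := by
  funext i
  simpa [dot_single] using h (Pi.single i 1)

lemma dot_neg {k : ℕ} (x y : Fin k → ℝ) : dot (-x) y = -dot x y := by
  simp [dot, Finset.sum_neg_distrib]

lemma dot_sub {k : ℕ} (x y z : Fin k → ℝ) :
    dot (x - y) z = dot x z - dot y z := by
  simp [dot, sub_mul, Finset.sum_sub_distrib]

/-- equivalence between the Lagrange-Dirac condition
`((q̇,ṗ), d_D L(q,v)) ∈ D_Δ(q,p)` in local coordinates and the implicit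
Lagrange-d'Alembert equations.  Here `Lq = ∂L/∂q(q,v)` and `Lv = ∂L/∂v(q,v)`
are the vectors representing the partial Fréchet derivatives of `L` at `(q,v)`. -/
theorem lagrange_dirac_iff_lagrange_dAlembert {n : ℕ}
    (L : (Fin n → ℝ) × (Fin n → ℝ) → ℝ)
    (Δ : Submodule ℝ (Fin n → ℝ))
    (q v p qd pd : Fin n → ℝ)
    (Lq Lv : Fin n → ℝ)
    (hL : ∃ f : ((Fin n → ℝ) × (Fin n → ℝ)) →L[ℝ] ℝ,
      HasFDerivAt L f (q, v) ∧
      ∀ ab : (Fin n → ℝ) × (Fin n → ℝ), f ab = dot Lq ab.1 + dot Lv ab.2) :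
    (p = Lv ∧ qd ∈ Δ ∧
      ∀ δq δp : Fin n → ℝ, δq ∈ Δ →
        dot (-Lq) δq + dot v δp = dot qd δp - dot pd δq)
    ↔
    (p = Lv ∧ qd = v ∧ v ∈ Δ ∧ ∀ u ∈ Δ, dot (pd - Lq) u = 0) := by
  constructor
  · rintro ⟨hp, hqd, h⟩
    have hqv : qd = v := by
      apply dot_ext
      intro z
      have := h 0 z (Submodule.zero_mem Δ)
      simp [dot] at this ⊢
      linarith [this]
    subst hqv
    refine ⟨hp, rfl, hqd, ?_⟩
    intro u hu
    have := h u 0 hu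
    simp [dot_neg, dot] at this
    rw [dot_sub]
    simp [dot]
    linarith [this]
  · rintro ⟨hp, hqd, hv, h⟩
    subst hqd
    refine ⟨hp, hv, ?_⟩
    intro δq δp hδq
    have := h δq hδq
    rw [dot_sub] at this
    rw [dot_neg]
    linarith [this]
end

section
/- Energy conservation for Lagrange-Dirac systems: let L : ℝ^n × ℝ^n → ℝ be differentiable, let Δ : ℝ^n → Submodule(ℝ, ℝ^n) assign a linear subspace of ℝ^n to each point, and let q, v, p : ℝ → ℝ^n be differentiable curves such that for every t: p(t) = ∂L/∂v(q(t),v(t)); q'(t) = v(t); v(t) ∈ Δ(q(t)); and (p'(t) − ∂L/∂q(q(t),v(t)))·u = 0 for all u ∈ Δ(q(t)). Then the generalized energy t ↦ p(t)·v(t) − L(q(t),v(t)) is constant. -/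
open scoped BigOperators

lemma hasDerivAt_dot {k : ℕ} (p v p' v' : ℝ → Fin k → ℝ) (t : ℝ)
    (hp : HasDerivAt p (p' t) t) (hv : HasDerivAt v (v' t) t) :
    HasDerivAt (fun s => dot (p s) (v s)) (dot (p' t) (v t) + dot (p t) (v' t)) t := by
  have hpi : ∀ i, HasDerivAt (fun s => p s i) (p' t i) t := fun i =>
    (hasDerivAt_pi.mp hp) i
  have hvi : ∀ i, HasDerivAt (fun s => v s i) (v' t i) t := fun i =>
    (hasDerivAt_pi.mp hv) i
  have : HasDerivAt (fun s => ∑ i, p s i * v s i)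
      (∑ i, (p' t i * v t i + p t i * v' t i)) t :=
    HasDerivAt.fun_sum fun i _ => (hpi i).mul (hvi i)
  simpa [dot, Finset.sum_add_distrib] using this

/-- energy conservation for Lagrange-Dirac systems.  If the
differentiable curves `(q,v,p)` satisfy the implicit Lagrange-d'Alembert
equations for a differentiable Lagrangian `L` (with partial gradients `Lq, Lv`)
and a distribution `Δ`, then the generalized energy `E = p·v − L(q,v)` is
constant along the motion. -/
theorem energy_conservation {n : ℕ}
    (L : (Fin n → ℝ) × (Fin n → ℝ) → ℝ)
    (Lq Lv : (Fin n → ℝ) × (Fin n → ℝ) → Fin n → ℝ)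
    (hL : ∀ x : (Fin n → ℝ) × (Fin n → ℝ),
      ∃ f : ((Fin n → ℝ) × (Fin n → ℝ)) →L[ℝ] ℝ,
        HasFDerivAt L f x ∧
        ∀ ab : (Fin n → ℝ) × (Fin n → ℝ), f ab = dot (Lq x) ab.1 + dot (Lv x) ab.2)
    (Δ : (Fin n → ℝ) → Submodule ℝ (Fin n → ℝ))
    (q v p q' v' p' : ℝ → Fin n → ℝ)
    (hq : ∀ t, HasDerivAt q (q' t) t)
    (hv : ∀ t, HasDerivAt v (v' t) t)
    (hp : ∀ t, HasDerivAt p (p' t) t)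
    (h1 : ∀ t, p t = Lv (q t, v t))
    (h2 : ∀ t, q' t = v t)
    (h3 : ∀ t, v t ∈ Δ (q t))
    (h4 : ∀ t, ∀ u ∈ Δ (q t), dot (p' t - Lq (q t, v t)) u = 0) :
    ∀ s t : ℝ,
      dot (p s) (v s) - L (q s, v s) = dot (p t) (v t) - L (q t, v t) := by
  set E : ℝ → ℝ := fun t => dot (p t) (v t) - L (q t, v t) with hE
  have hE0 : ∀ t, HasDerivAt E 0 t := by
    intro t
    obtain ⟨f, hf, hfab⟩ := hL (q t, v t)
    have hLcomp : HasDerivAt (fun s => L (q s, v s))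
        (dot (Lq (q t, v t)) (q' t) + dot (Lv (q t, v t)) (v' t)) t := by
      have := hf.comp_hasDerivAt t ((hq t).prodMk (hv t))
      simp [hfab] at this
      exact this
    have hdot := hasDerivAt_dot p v p' v' t (hp t) (hv t)
    have := hdot.sub hLcomp
    have hkey : dot (p' t) (v t) + dot (p t) (v' t) -
        (dot (Lq (q t, v t)) (q' t) + dot (Lv (q t, v t)) (v' t)) = 0 := by
      have h5 := h4 t (v t) (h3 t)
      rw [dot_sub] at h5
      rw [h2, ← h1]
      linarith
    rwa [hkey] at this
  intro s t
  exact is_const_of_deriv_eq_zero (fun x => (hE0 x).differentiableAt)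
    (fun x => (hE0 x).deriv) s t
end
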